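/- Every Girard quantale is a von Neumann quantale, and the Girard duality a ↦ a → d restricts on right-sided elements to the von Neumann duality: for right-sided r, r → d = r → 0, and for left-sided l, d ⧸ l = 0 ⧸ l. -/

import Mathlib

/-- A quantale: a complete lattice with an associative multiplication
distributing over arbitrary joins in both variables. -/
class GQuantale (α : Type*) extends CompleteLattice α, Mul α where
  mul_assoc : ∀ a b c : α, a * b * c = a * (b * c)
  mul_sSup : ∀ (a : α) (s : Set α), a * sSup s = ⨆ b ∈ s, a * b
  sSup_mul : ∀ (s : Set α) (a : α), sSup s * a = ⨆ b ∈ s, b * a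

section Aux
variable {Q : Type*} [GQuantale Q]

private lemma qmul_bot (a : Q) : a * (⊥ : Q) = ⊥ := by
  have h := GQuantale.mul_sSup a (∅ : Set Q)
  simpa using h

private lemma qsSup_mul_le {s : Set Q} {a c : Q} (h : ∀ x ∈ s, x * a ≤ c) :
    sSup s * a ≤ c := by
  rw [GQuantale.sSup_mul]; exact iSup₂_le h

private lemma qmul_le_right {a b : Q} (c : Q) (h : a ≤ b) : a * c ≤ b * c := by
  have hb : b = sSup {a, b} := by rw [sSup_pair, sup_eq_right.mpr h]
  calc a * c ≤ sSup {a, b} * c := by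
        rw [GQuantale.sSup_mul]
        exact le_iSup₂_of_le a (by simp) le_rfl
    _ = b * c := by rw [← hb]

private lemma qmul_le_left {a b : Q} (c : Q) (h : a ≤ b) : c * a ≤ c * b := by
  have hb : b = sSup {a, b} := by rw [sSup_pair, sup_eq_right.mpr h]
  calc c * a ≤ c * sSup {a, b} := by
        rw [GQuantale.mul_sSup]
        exact le_iSup₂_of_le a (by simp) le_rfl
    _ = c * b := by rw [← hb]

end Aux

/-- Every Girard quantale is von Neumann, and the Girard duality restricted to
right- and left-sided elements is the von Neumann duality by annulators. -/
theorem stmt10 {Q : Type*} [GQuantale Q] (d : Q)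
    (hcyc : ∀ a b : Q, a * b ≤ d ↔ b * a ≤ d)
    (hdual₁ : ∀ a : Q, sSup {x : Q | x * sSup {y : Q | a * y ≤ d} ≤ d} = a)
    (hdual₂ : ∀ a : Q, sSup {y : Q | sSup {x : Q | x * a ≤ d} * y ≤ d} = a) :
    -- Q is von Neumann: the annulator maps are mutually inverse between
    -- right-sided and left-sided elements
    ((∀ r : Q, r * ⊤ ≤ r → ⊤ * sSup {x : Q | x * r ≤ ⊥} ≤ sSup {x : Q | x * r ≤ ⊥}) ∧
     (∀ l : Q, ⊤ * l ≤ l → sSup {y : Q | l * y ≤ ⊥} * ⊤ ≤ sSup {y : Q | l * y ≤ ⊥}) ∧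
     (∀ r : Q, r * ⊤ ≤ r → sSup {y : Q | sSup {x : Q | x * r ≤ ⊥} * y ≤ ⊥} = r) ∧
     (∀ l : Q, ⊤ * l ≤ l → sSup {x : Q | x * sSup {y : Q | l * y ≤ ⊥} ≤ ⊥} = l)) ∧
    -- the Girard duality extends the von Neumann duality
    ((∀ r : Q, r * ⊤ ≤ r → sSup {x : Q | x * r ≤ d} = sSup {x : Q | x * r ≤ ⊥}) ∧
     (∀ l : Q, ⊤ * l ≤ l → sSup {y : Q | l * y ≤ d} = sSup {y : Q | l * y ≤ ⊥})) := by
  -- basic facts about the Girard dual D a = sSup {x | x * a ≤ d}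
  have hmul₁ : ∀ a : Q, sSup {x : Q | x * a ≤ d} * a ≤ d := fun a =>
    qsSup_mul_le (fun x hx => hx)
  have hmul₂ : ∀ a : Q, a * sSup {x : Q | x * a ≤ d} ≤ d := fun a =>
    (hcyc _ a).mp (hmul₁ a)
  have hsetd : ∀ a : Q, {x : Q | x * a ≤ d} = {x : Q | a * x ≤ d} := by
    intro a; ext x; exact hcyc x a
  have hgal : ∀ a x : Q, x * a ≤ d ↔ x ≤ sSup {x : Q | x * a ≤ d} := by
    intro a x
    constructor
    · intro h; exact le_sSup h
    · intro h; exact (qmul_le_right a h).trans (hmul₁ a)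
  -- double dual
  have hDD : ∀ a : Q, sSup {x : Q | x * sSup {y : Q | y * a ≤ d} ≤ d} = a := by
    intro a
    rw [hsetd (sSup {y : Q | y * a ≤ d})]
    exact hdual₂ a
  have hDbot : sSup {x : Q | x * (⊥ : Q) ≤ d} = ⊤ := by
    apply le_antisymm le_top
    apply le_sSup
    show (⊤ : Q) * ⊥ ≤ d
    rw [qmul_bot]; exact bot_le
  have hDtop : sSup {x : Q | x * (⊤ : Q) ≤ d} = ⊥ := by
    have h := hDD (⊥ : Q)
    rw [hDbot] at h
    exact h
  -- for right-sided r, the d-annulator and ⊥-annulator coincide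
  have hrset : ∀ r : Q, r * ⊤ ≤ r → {x : Q | x * r ≤ ⊥} = {x : Q | x * r ≤ d} := by
    intro r hr
    ext x
    simp only [Set.mem_setOf_eq]
    constructor
    · intro h; exact h.trans bot_le
    · intro h
      have h1 : (x * r) * ⊤ ≤ d := by
        rw [GQuantale.mul_assoc]
        exact (qmul_le_left x hr).trans h
      have h2 := (hgal ⊤ (x * r)).mp h1
      rwa [hDtop] at h2
  have hlset : ∀ l : Q, ⊤ * l ≤ l → {y : Q | l * y ≤ ⊥} = {y : Q | l * y ≤ d} := by
    intro l hl
    ext y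
    simp only [Set.mem_setOf_eq]
    constructor
    · intro h; exact h.trans bot_le
    · intro h
      have h1 : (l * y) * ⊤ ≤ d := by
        rw [hcyc, ← GQuantale.mul_assoc]
        exact (qmul_le_right y hl).trans h
      have h2 := (hgal ⊤ (l * y)).mp h1
      rwa [hDtop] at h2
  -- the dual of a right-sided element is left-sided (d-version)
  have hG1 : ∀ r : Q, r * ⊤ ≤ r →
      ⊤ * sSup {x : Q | x * r ≤ d} ≤ sSup {x : Q | x * r ≤ d} := by
    intro r hr
    apply (hgal r _).mp
    rw [hcyc, ← GQuantale.mul_assoc]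
    exact (qmul_le_right _ hr).trans (hmul₂ r)
  -- the dual of a left-sided element is right-sided (d-version)
  have hG2 : ∀ l : Q, ⊤ * l ≤ l →
      sSup {x : Q | x * l ≤ d} * ⊤ ≤ sSup {x : Q | x * l ≤ d} := by
    intro l hl
    apply (hgal l _).mp
    rw [GQuantale.mul_assoc]
    exact (qmul_le_left _ hl).trans (hmul₁ l)
  refine ⟨⟨?_, ?_, ?_, ?_⟩, ?_, ?_⟩
  · intro r hr
    rw [hrset r hr]
    exact hG1 r hr
  · intro l hl
    rw [hlset l hl, ← hsetd l]
    exact hG2 l hl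
  · intro r hr
    rw [hrset r hr, hlset _ (hG1 r hr)]
    exact hdual₂ r
  · intro l hl
    rw [hlset l hl]
    have hT : sSup {y : Q | l * y ≤ d} * ⊤ ≤ sSup {y : Q | l * y ≤ d} := by
      rw [← hsetd l]
      exact hG2 l hl
    rw [hrset _ hT]
    exact hdual₁ l
  · intro r hr
    rw [hrset r hr]
  · intro l hl
    rw [hlset l hl]
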